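/- Let C be a distributive category and T a monad on C. Suppose T extends coherently to monads T^W on all simple slices C[W], in the sense that each T^W lifts T along the co-Kleisli adjunction (so that T^1 agrees with T under C ≅ C[1]) and C[k]∘T^V = T^W∘C[k] for every k : W → V, with C[k] preserving the monad structure. Then T is a strong monad, with strength τ_{W,X} : W×TX → T(W×X) given by T^W j_X, where j_X is the identity W×X → W×X viewed as a C[W]-morphism X → W×X. -/

import Mathlib

open CategoryTheory Limits

universe v u

variable (C : Type u) [Category.{v} C] [HasFiniteProducts C] [HasFiniteCoproducts C]

/-- The canonical distributivity morphism `(X × Y) + (X × Z) ⟶ X × (Y + Z)`. -/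
noncomputable def distCan (X Y Z : C) : (X ⨯ Y) ⨿ (X ⨯ Z) ⟶ X ⨯ (Y ⨿ Z) :=
  coprod.desc (prod.map (𝟙 X) coprod.inl) (prod.map (𝟙 X) coprod.inr)

/-- A distributive category: the canonical morphism
`(X × Y) + (X × Z) ⟶ X × (Y + Z)` is an isomorphism. -/
class Distributive : Prop where
  isIso : ∀ X Y Z : C, IsIso (distCan C X Y Z)

attribute [instance] Distributive.isIso

/-- The inverse `dist` of the canonical distributivity morphism. -/
noncomputable def distInv [Distributive C] (X Y Z : C) :
    X ⨯ (Y ⨿ Z) ⟶ (X ⨯ Y) ⨿ (X ⨯ Z) :=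
  inv (distCan C X Y Z)

/-- A monad on `C` presented as a Kleisli triple. -/
structure KMonad where
  obj : C → C
  η : ∀ X : C, X ⟶ obj X
  bind : ∀ {X Y : C}, (X ⟶ obj Y) → (obj X ⟶ obj Y)
  bind_η : ∀ X : C, bind (η X) = 𝟙 (obj X)
  η_bind : ∀ {X Y : C} (f : X ⟶ obj Y), η X ≫ bind f = f
  bind_bind : ∀ {X Y Z : C} (f : X ⟶ obj Y) (g : Y ⟶ obj Z),
      bind (f ≫ bind g) = bind f ≫ bind g

variable {C}

/-- The functorial action of a Kleisli triple. -/
def KMonad.map (M : KMonad C) {X Y : C} (f : X ⟶ Y) : M.obj X ⟶ M.obj Y :=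
  M.bind (f ≫ M.η Y)

variable (C)

/-- A strong monad on a category with finite products: a Kleisli triple together
with a strength satisfying the standard coherence conditions. -/
structure SMonad extends KMonad C where
  τ : ∀ X Y : C, X ⨯ obj Y ⟶ obj (X ⨯ Y)
  τ_natural : ∀ {X X' Y Y' : C} (f : X ⟶ X') (g : Y ⟶ Y'),
      prod.map f (bind (g ≫ η Y')) ≫ τ X' Y'
        = τ X Y ≫ bind (prod.map f g ≫ η (X' ⨯ Y'))
  τ_η : ∀ X Y : C, prod.map (𝟙 X) (η Y) ≫ τ X Y = η (X ⨯ Y)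
  τ_bind : ∀ {X Y Z : C} (f : Y ⟶ obj Z),
      prod.map (𝟙 X) (bind f) ≫ τ X Z = τ X Y ≫ bind (prod.map (𝟙 X) f ≫ τ X Z)
  τ_unitor : ∀ Y : C, τ (⊤_ C) Y ≫ bind (prod.snd ≫ η Y) = prod.snd
  τ_assoc : ∀ X Y Z : C,
      (prod.associator X Y (obj Z)).hom ≫ prod.map (𝟙 X) (τ Y Z) ≫ τ X (Y ⨯ Z) ≫
          bind ((prod.associator X Y Z).inv ≫ η ((X ⨯ Y) ⨯ Z))
        = τ (X ⨯ Y) Z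

variable {C}

/-- The morphism `δ = T dist⁻¹ ∘ τ : X × T(Y+Z) ⟶ T(X×Y + X×Z)`. -/
noncomputable def SMonad.δ [Distributive C] (M : SMonad C) (X Y Z : C) :
    X ⨯ M.obj (Y ⨿ Z) ⟶ M.obj ((X ⨯ Y) ⨿ (X ⨯ Z)) :=
  M.τ X (Y ⨿ Z) ≫ M.toKMonad.map (distInv C X Y Z)

variable (C)

/-- A (coproduct) summand `Y' ↪ Y`: a complement `compl` together with an
isomorphism `Y' ⨿ compl ≅ Y`.  The injection is `Summand.ι`. -/
structure Summand (Y' Y : C) where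
  compl : C
  iso : Y' ⨿ compl ≅ Y

namespace Summand

variable {C}

/-- The summand injection `Y' ⟶ Y`. -/
noncomputable def ι {Y' Y : C} (σ : Summand C Y' Y) : Y' ⟶ Y :=
  coprod.inl ≫ σ.iso.hom

/-- The complement injection. -/
noncomputable def ι' {Y' Y : C} (σ : Summand C Y' Y) : σ.compl ⟶ Y :=
  coprod.inr ≫ σ.iso.hom

variable (C)

/-- The canonical left summand `Y ↪ Y ⨿ Z`. -/
noncomputable def inlS (Y Z : C) : Summand C Y (Y ⨿ Z) :=
  ⟨Z, Iso.refl _⟩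

/-- The canonical right summand `Z ↪ Y ⨿ Z`. -/
noncomputable def inrS (Y Z : C) : Summand C Z (Y ⨿ Z) :=
  ⟨Y, coprod.braiding Z Y⟩

variable {C}

/-- Transport of a summand along an isomorphism of the ambient object. -/
noncomputable def ofIso {Y' Y Z : C} (σ : Summand C Y' Y) (θ : Y ≅ Z) : Summand C Y' Z :=
  ⟨σ.compl, σ.iso ≪≫ θ⟩

/-- Composition of summands: a summand of a summand is a summand. -/
noncomputable def comp {Y'' Y' Y : C} (σ : Summand C Y' Y) (θ : Summand C Y'' Y') :
    Summand C Y'' Y :=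
  ⟨θ.compl ⨿ σ.compl,
    (coprod.associator Y'' θ.compl σ.compl).symm ≪≫
      coprod.mapIso θ.iso (Iso.refl σ.compl) ≪≫ σ.iso⟩

/-- The summand `σ + id_Z : Y' ⨿ Z ↪ Y ⨿ Z` induced by `σ : Y' ↪ Y`. -/
noncomputable def sumId {Y' Y : C} (σ : Summand C Y' Y) (Z : C) :
    Summand C (Y' ⨿ Z) (Y ⨿ Z) :=
  ⟨σ.compl,
    coprod.associator Y' Z σ.compl ≪≫
      coprod.mapIso (Iso.refl Y') (coprod.braiding Z σ.compl) ≪≫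
      (coprod.associator Y' σ.compl Z).symm ≪≫
      coprod.mapIso σ.iso (Iso.refl Z)⟩

/-- The summand `id_W × σ : W × Y' ↪ W × Y` (using distributivity). -/
noncomputable def prodLeft [Distributive C] {Y' Y : C} (σ : Summand C Y' Y) (W : C) :
    Summand C (W ⨯ Y') (W ⨯ Y) :=
  ⟨W ⨯ σ.compl, asIso (distCan C W Y' σ.compl) ≪≫ prod.mapIso (Iso.refl W) σ.iso⟩

/-- The union summand `[inl ∘ inr , inr] : X ⨿ X ↪ (Y ⨿ X) ⨿ X`
used in the codiagonal law. -/
noncomputable def codiagS (Y X : C) : Summand C (X ⨿ X) ((Y ⨿ X) ⨿ X) :=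
  ⟨Y, coprod.braiding (X ⨿ X) Y ≪≫ (coprod.associator Y X X).symm⟩

end Summand

/-- A notion of abstract guardedness on a strong monad, closed under the rules
(trv), (sum), (cmp) and (str): a strongly guarded monad. -/
structure GuardStruct [Distributive C] (M : SMonad C) where
  Guarded : ∀ {X Y' Y : C}, (X ⟶ M.obj Y) → Summand C Y' Y → Prop
  trv : ∀ {X Y Z : C} (f : X ⟶ M.obj Y),
      Guarded (f ≫ M.toKMonad.map (coprod.inl : Y ⟶ Y ⨿ Z)) (Summand.inrS C Y Z)
  sum : ∀ {X Y Z' Z : C} (f : X ⟶ M.obj Z) (g : Y ⟶ M.obj Z) (σ : Summand C Z' Z),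
      Guarded f σ → Guarded g σ → Guarded (coprod.desc f g) σ
  cmp : ∀ {X Y Z V' V : C} (f : X ⟶ M.obj (Y ⨿ Z)) (g : Y ⟶ M.obj V) (h : Z ⟶ M.obj V)
      (σ : Summand C V' V), Guarded f (Summand.inrS C Y Z) → Guarded g σ →
      Guarded (f ≫ M.bind (coprod.desc g h)) σ
  str : ∀ {X Y' Y : C} (W : C) (f : X ⟶ M.obj Y) (σ : Summand C Y' Y),
      Guarded f σ → Guarded (prod.map (𝟙 W) f ≫ M.τ W Y) (σ.prodLeft W)

set_option maxHeartbeats 1600000 in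
/-- If a monad `T` on a distributive category `C` extends coherently to monads
`T^W` on all simple slices `C[W]` — here presented by their units
`ηW W X : X ⟶ T^W X` and Kleisli liftings `bW` in terms of `C`, lifting `T`
along the co-Kleisli adjunction (so `J^W` preserves the monad structure, and
in particular `T^1` agrees with `T` under `C ≅ C[1]`) and coherent with the
functors `C[k]` — then `T` is a strong monad, with strength
`τ_{W,X} = T^W j_X` where `j_X` is the identity `W×X ⟶ W×X` viewed as a
`C[W]`-morphism `X ⟶ W×X`. -/
theorem strong_of_coherent_slice_extensions {C : Type u} [Category.{v} C]
    [HasFiniteProducts C] [HasFiniteCoproducts C] [Distributive C] (M : KMonad C)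
    (ηW : ∀ (W X : C), W ⨯ X ⟶ M.obj X)
    (bW : ∀ (W : C) {X Y : C}, (W ⨯ X ⟶ M.obj Y) → (W ⨯ M.obj X ⟶ M.obj Y))
    -- each (T^W, ηW, bW) is a monad on C[W] (Kleisli-triple laws in C-terms):
    (h1 : ∀ W X : C, bW W (ηW W X) = prod.snd)
    (h2 : ∀ (W : C) {X Y : C} (f : W ⨯ X ⟶ M.obj Y),
        prod.lift prod.fst (ηW W X) ≫ bW W f = f)
    (h3 : ∀ (W : C) {X Y Z : C} (f : W ⨯ X ⟶ M.obj Y) (g : W ⨯ Y ⟶ M.obj Z),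
        bW W (prod.lift prod.fst f ≫ bW W g) = prod.lift prod.fst (bW W f) ≫ bW W g)
    -- T^W lifts T along the co-Kleisli adjunction (J^W preserves η and bind):
    (h4 : ∀ W X : C, ηW W X = prod.snd ≫ M.η X)
    (h5 : ∀ (W : C) {X Y : C} (f : X ⟶ M.obj Y),
        bW W (prod.snd ≫ f) = prod.snd ≫ M.bind f)
    -- coherence: each C[k] preserves the monad structure:
    (h6 : ∀ {W V : C} (k : W ⟶ V) (X : C), prod.map k (𝟙 X) ≫ ηW V X = ηW W X)
    (h7 : ∀ {W V : C} (k : W ⟶ V) {X Y : C} (f : V ⨯ X ⟶ M.obj Y),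
        prod.map k (𝟙 (M.obj X)) ≫ bW V f = bW W (prod.map k (𝟙 X) ≫ f)) :
    ∃ S : SMonad C, S.toKMonad = M ∧
      ∀ W X : C,
        HEq (S.τ W X) (bW W (prod.lift prod.fst (𝟙 (W ⨯ X)) ≫ ηW W (W ⨯ X))) := by
  classical
  -- `j_X` composed with the unit is just `M.η`
  have hτ : ∀ W X : C, prod.lift prod.fst (𝟙 (W ⨯ X)) ≫ ηW W (W ⨯ X) = M.η (W ⨯ X) := by
    intro W X
    rw [h4, ← Category.assoc, prod.lift_snd, Category.id_comp]
  -- bind after bW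
  have hL1 : ∀ (W : C) {X Y Z : C} (h : W ⨯ X ⟶ M.obj Y) (g : Y ⟶ M.obj Z),
      bW W h ≫ M.bind g = bW W (h ≫ M.bind g) := by
    intro W X Y Z h g
    have e : h ≫ M.bind g = prod.lift prod.fst h ≫ bW W (prod.snd ≫ g) := by
      rw [h5, ← Category.assoc, prod.lift_snd]
    rw [e, h3, h5, ← Category.assoc, prod.lift_snd]
  -- pairing with a pure morphism cancels bW
  have hL2 : ∀ (W : C) {X Y V : C} (u : W ⨯ X ⟶ V) (f : W ⨯ V ⟶ M.obj Y),
      prod.lift prod.fst (u ≫ M.η V) ≫ bW W f = prod.lift prod.fst u ≫ f := by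
    intro W X Y V u f
    have e : prod.lift prod.fst (u ≫ M.η V)
        = prod.lift prod.fst u ≫ prod.lift prod.fst (ηW W V) := by
      rw [h4]; apply Limits.prod.hom_ext <;> simp [prod.lift_snd, prod.lift_fst, prod.lift_snd_assoc]
    rw [e, Category.assoc, h2]
  -- unit law for the strength
  have key_η : ∀ W X : C,
      prod.map (𝟙 W) (M.η X) ≫ bW W (M.η (W ⨯ X)) = M.η (W ⨯ X) := by
    intro W X
    have e : prod.map (𝟙 W) (M.η X) = prod.lift prod.fst (ηW W X) := by
      rw [h4]; apply Limits.prod.hom_ext <;> simp [prod.lift_snd, prod.lift_fst]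
    rw [e, h2]
  -- bind law for the strength
  have key_bind : ∀ (W : C) {Y Z : C} (f : Y ⟶ M.obj Z),
      prod.map (𝟙 W) (M.bind f) ≫ bW W (M.η (W ⨯ Z))
        = bW W (M.η (W ⨯ Y)) ≫ M.bind (prod.map (𝟙 W) f ≫ bW W (M.η (W ⨯ Z))) := by
    intro W Y Z f
    have e1 : prod.map (𝟙 W) (M.bind f) = prod.lift prod.fst (bW W (prod.snd ≫ f)) := by
      rw [h5]; apply Limits.prod.hom_ext <;> simp [prod.lift_snd, prod.lift_fst]
    have e2 : prod.lift prod.fst (prod.snd ≫ f) = prod.map (𝟙 W) f := by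
      apply Limits.prod.hom_ext <;> simp [prod.lift_snd, prod.lift_fst]
    rw [e1, ← h3, e2, hL1, M.η_bind]
  -- naturality in the first variable
  have key_nat1 : ∀ {W V : C} (k : W ⟶ V) (X : C),
      prod.map k (𝟙 (M.obj X)) ≫ bW V (M.η (V ⨯ X))
        = bW W (M.η (W ⨯ X)) ≫ M.bind (prod.map k (𝟙 X) ≫ M.η (V ⨯ X)) := by
    intro W V k X
    rw [h7, hL1, M.η_bind]
  refine ⟨{ toKMonad := M
            τ := fun W X => bW W (prod.lift prod.fst (𝟙 (W ⨯ X)) ≫ ηW W (W ⨯ X))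
            τ_natural := ?_
            τ_η := ?_
            τ_bind := ?_
            τ_unitor := ?_
            τ_assoc := ?_ }, rfl, fun W X => HEq.rfl⟩
  · intro X X' Y Y' f g
    simp only [hτ]
    have e : prod.map f (M.bind (g ≫ M.η Y'))
        = prod.map f (𝟙 (M.obj Y)) ≫ prod.map (𝟙 X') (M.bind (g ≫ M.η Y')) := by
      simp
    rw [e, Category.assoc, key_bind, ← Category.assoc, key_nat1, Category.assoc,
      ← M.bind_bind]
    congr 1
    rw [Category.assoc, M.η_bind]
    have e2 : prod.map (𝟙 X') (g ≫ M.η Y') ≫ bW X' (M.η (X' ⨯ Y'))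
        = prod.map (𝟙 X') g ≫ M.η (X' ⨯ Y') := by
      have e3 : prod.map (𝟙 X') (g ≫ M.η Y')
          = prod.map (𝟙 X') g ≫ prod.map (𝟙 X') (M.η Y') := by simp
      rw [e3, Category.assoc, key_η]
    rw [e2, ← Category.assoc, prod.map_map, Category.comp_id, Category.id_comp]
  · intro X Y
    simp only [hτ]; exact key_η X Y
  · intro X Y Z f
    simp only [hτ]; exact key_bind X f
  · intro Y
    simp only [hτ]
    rw [hL1, M.η_bind, h5, M.bind_η, Category.comp_id]
  · intro X Y Z
    simp only [hτ]
    rw [hL1, M.η_bind]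
    -- massage the left-hand side
    have e1 : (prod.associator X Y (M.obj Z)).hom ≫ prod.map (𝟙 X) (bW Y (M.η (Y ⨯ Z)))
        = prod.lift prod.fst
            (bW (X ⨯ Y) (prod.map prod.snd (𝟙 Z) ≫ M.η (Y ⨯ Z)))
            ≫ prod.map prod.fst (𝟙 (M.obj (Y ⨯ Z))) := by
      have hb : prod.lift (prod.fst ≫ prod.snd) (prod.snd : (X ⨯ Y) ⨯ M.obj Z ⟶ _)
          = prod.map prod.snd (𝟙 (M.obj Z)) := by
        apply Limits.prod.hom_ext <;> simp [prod.lift_snd, prod.lift_fst]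
      have : (prod.associator X Y (M.obj Z)).hom ≫ prod.map (𝟙 X) (bW Y (M.η (Y ⨯ Z)))
          = prod.lift (prod.fst ≫ prod.fst)
              (prod.map prod.snd (𝟙 (M.obj Z)) ≫ bW Y (M.η (Y ⨯ Z))) := by
        apply Limits.prod.hom_ext <;> simp [prod.associator_hom, prod.lift_snd, prod.lift_fst]
        rw [hb]
      rw [this, h7]
      apply Limits.prod.hom_ext <;> simp
    rw [← Category.assoc, e1, Category.assoc, h7, ← h3]
    have e2 : prod.lift prod.fst (prod.map prod.snd (𝟙 Z) ≫ M.η (Y ⨯ Z))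
          ≫ bW (X ⨯ Y) (prod.map prod.fst (𝟙 (Y ⨯ Z))
            ≫ (prod.associator X Y Z).inv ≫ M.η ((X ⨯ Y) ⨯ Z))
        = M.η ((X ⨯ Y) ⨯ Z) := by
      rw [hL2]
      have e3 : prod.lift prod.fst (prod.map prod.snd (𝟙 Z))
            ≫ prod.map prod.fst (𝟙 (Y ⨯ Z))
          = (prod.associator X Y Z).hom := by
        apply Limits.prod.hom_ext
        · simp [prod.associator_hom, prod.lift_snd, prod.lift_fst]
        · apply Limits.prod.hom_ext <;> simp [prod.associator_hom, prod.lift_snd, prod.lift_fst]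
      rw [← Category.assoc, ← Category.assoc, e3, Category.assoc,
        ← Category.assoc, Iso.hom_inv_id, Category.id_comp]
    rw [e2]
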